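/- For any undirected graph G and any total order σ on V(G ×_e K_2), every σ-semi-induced matching M in G ×_e K_2 decomposes as M₁ ∪ M₂ where M₁ is a σ-semi-induced matching in G × K_2 and M₂ corresponds to an independent set in G; consequently sim(G ×_e K_2) ≤ sim(G × K_2) + α(G). -/

import Mathlib

open SimpleGraph

def tensor {α β : Type*} (G : SimpleGraph α) (H : SimpleGraph β) :
    SimpleGraph (α × β) where
  Adj p q := G.Adj p.1 q.1 ∧ H.Adj p.2 q.2
  symm := ⟨fun p q h => ⟨h.1.symm, h.2.symm⟩⟩
  loopless := ⟨fun p h => G.irrefl h.1⟩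

def etensor {α β : Type*} (G : SimpleGraph α) (H : SimpleGraph β) :
    SimpleGraph (α × β) where
  Adj p q := (G.Adj p.1 q.1 ∨ p.1 = q.1) ∧ H.Adj p.2 q.2
  symm := ⟨fun p q h => ⟨h.1.imp (fun h' => h'.symm) (fun h' => h'.symm), h.2.symm⟩⟩
  loopless := ⟨fun p h => H.irrefl h.2⟩

def disj {α β : Type*} (G : SimpleGraph α) (H : SimpleGraph β) :
    SimpleGraph (α × β) where
  Adj p q := G.Adj p.1 q.1 ∨ H.Adj p.2 q.2
  symm := ⟨fun p q h => h.imp (fun h' => h'.symm) (fun h' => h'.symm)⟩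
  loopless := ⟨fun p h => h.elim (G.irrefl) (H.irrefl)⟩

def lexProd {α β : Type*} (G : SimpleGraph α) (H : SimpleGraph β) :
    SimpleGraph (α × β) where
  Adj p q := G.Adj p.1 q.1 ∨ (p.1 = q.1 ∧ H.Adj p.2 q.2)
  symm := ⟨fun p q h => h.imp (fun h' => h'.symm) (fun h' => ⟨h'.1.symm, h'.2.symm⟩)⟩
  loopless := ⟨fun p h => h.elim (G.irrefl) (fun h' => H.irrefl h'.2)⟩

def disjPow {α : Type*} (G : SimpleGraph α) (k : ℕ) : SimpleGraph (Fin k → α) where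
  Adj x y := ∃ i, G.Adj (x i) (y i)
  symm := ⟨fun x y h => h.imp (fun i hi => hi.symm)⟩
  loopless := ⟨fun x h => h.elim (fun i hi => G.irrefl hi)⟩

def lexPow {α : Type*} (G : SimpleGraph α) (k : ℕ) : SimpleGraph (Fin k → α) where
  Adj x y := ∃ i, G.Adj (x i) (y i) ∧ ∀ j, j < i → x j = y j
  symm := ⟨fun x y h => h.imp (fun i hi => ⟨hi.1.symm, fun j hj => (hi.2 j hj).symm⟩)⟩
  loopless := ⟨fun x h => h.elim (fun i hi => G.irrefl hi.1)⟩

def IsIndMatching {V : Type*} (G : SimpleGraph V) {n : ℕ} (a b : Fin n → V) : Prop :=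
  (∀ i, G.Adj (a i) (b i)) ∧
  ∀ i j, i ≠ j → ¬ G.Adj (a i) (a j) ∧ ¬ G.Adj (a i) (b j) ∧ ¬ G.Adj (b i) (b j)

noncomputable def imNum {V : Type*} (G : SimpleGraph V) : ℕ :=
  sSup {n | ∃ a b : Fin n → V, IsIndMatching G a b}

def SemiCond {V : Type*} (G : SimpleGraph V) (σ : V → ℕ) (u u' v v' : V) : Prop :=
  σ u < σ u' → σ u < σ v → σ v < σ v' → ¬ G.Adj u v ∧ ¬ G.Adj u v'

def IsSemiIndMatching {V : Type*} (G : SimpleGraph V) (σ : V → ℕ) {n : ℕ}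
    (a b : Fin n → V) : Prop :=
  (∀ i, G.Adj (a i) (b i)) ∧
  (∀ i j, i ≠ j → a i ≠ a j ∧ a i ≠ b j ∧ b i ≠ b j) ∧
  (∀ i j, i ≠ j →
    SemiCond G σ (a i) (b i) (a j) (b j) ∧ SemiCond G σ (a i) (b i) (b j) (a j) ∧
    SemiCond G σ (b i) (a i) (a j) (b j) ∧ SemiCond G σ (b i) (a i) (b j) (a j))

noncomputable def simNumOrd {V : Type*} (G : SimpleGraph V) (σ : V → ℕ) : ℕ :=
  sSup {n | ∃ a b : Fin n → V, IsSemiIndMatching G σ a b}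

noncomputable def simNum {V : Type*} (G : SimpleGraph V) : ℕ :=
  sSup {n | ∃ σ : V → ℕ, Function.Injective σ ∧
    ∃ a b : Fin n → V, IsSemiIndMatching G σ a b}

noncomputable def indepNum {V : Type*} (G : SimpleGraph V) : ℕ :=
  sSup {n | ∃ s : Finset V, s.card = n ∧ ∀ u ∈ s, ∀ v ∈ s, ¬ G.Adj u v}

noncomputable def chromNum {V : Type*} (G : SimpleGraph V) : ℕ :=
  sInf {n | G.Colorable n}

def vecLT {d : ℕ} (x y : Fin d → ℝ) : Prop := (∀ i, x i ≤ y i) ∧ ∃ i, x i < y i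

def Realizes {V : Type*} (R : V → V → Prop) {d : ℕ} (φ : V → Fin d → ℝ) : Prop :=
  ∀ u v, u ≠ v → (R u v ↔ vecLT (φ u) (φ v))

noncomputable def posetDim {V : Type*} (R : V → V → Prop) : ℕ :=
  sInf {d | ∃ φ : V → Fin d → ℝ, Realizes R φ}

def IsHeightTwoPoset {V : Type*} (R : V → V → Prop) : Prop :=
  (∀ u, ¬ Relation.TransGen R u u) ∧
  (∀ u v w, R u v → R v w → R u w) ∧
  (∀ u, (∀ v, ¬ R v u) ∨ (∀ v, ¬ R u v))

def etensorRel {α β : Type*} (G : SimpleGraph α) (R : β → β → Prop) :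
    α × β → α × β → Prop :=
  fun p q => (G.Adj p.1 q.1 ∨ p.1 = q.1) ∧ R p.2 q.2

def tensorRel {α β : Type*} (G : SimpleGraph α) (R : β → β → Prop) :
    α × β → α × β → Prop :=
  fun p q => G.Adj p.1 q.1 ∧ R p.2 q.2

def K2dir : Fin 2 → Fin 2 → Prop := fun i j => i = 0 ∧ j = 1


lemma my_aux_min {V : Type*} (G : SimpleGraph V) (σ : V × Fin 2 → ℕ)
    {x x' y y' : V × Fin 2}
    (hsc : SemiCond (etensor G (⊤ : SimpleGraph (Fin 2))) σ x x' y y')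
    (hy : y.1 = y'.1) (hyy : y ≠ y')
    (h1 : σ x < σ x') (h2 : σ x < σ y) (h3 : σ y < σ y')
    (hadj : G.Adj x.1 y.1) : False := by
  obtain ⟨hA, hB⟩ := hsc h1 h2 h3
  have hy2 : y.2 ≠ y'.2 := fun h => hyy (Prod.ext hy h)
  by_cases hxy : x.2 = y.2
  · refine hB (And.intro (Or.inl (by rw [← hy]; exact hadj)) ((SimpleGraph.top_adj x.2 y'.2).mpr ?_))
    rw [hxy]; exact hy2
  · exact hA (And.intro (Or.inl hadj) ((SimpleGraph.top_adj x.2 y.2).mpr hxy))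

lemma my_decomp {V : Type*} [Fintype V] (G : SimpleGraph V)
    (σ : V × Fin 2 → ℕ) (hσ : Function.Injective σ)
    (n : ℕ) (a b : Fin n → V × Fin 2)
    (hM : IsSemiIndMatching (etensor G (⊤ : SimpleGraph (Fin 2))) σ a b) :
    ∃ (n₁ n₂ : ℕ) (f : Fin n₁ → Fin n) (g : Fin n₂ → Fin n),
      n = n₁ + n₂ ∧ Function.Injective f ∧ Function.Injective g ∧
      (∀ i j, f i ≠ g j) ∧
      IsSemiIndMatching (tensor G (⊤ : SimpleGraph (Fin 2))) σ (a ∘ f) (b ∘ f) ∧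
      (∀ j, (a (g j)).1 = (b (g j)).1) ∧
      (∀ j j', j ≠ j' → (a (g j)).1 ≠ (a (g j')).1 ∧ ¬ G.Adj (a (g j)).1 (a (g j')).1) := by
  classical
  obtain ⟨hadj, hdist, hsc⟩ := hM
  set s : Finset (Fin n) := Finset.univ.filter (fun i => ¬ ((a i).1 = (b i).1)) with hs
  set t : Finset (Fin n) := Finset.univ.filter (fun i => (a i).1 = (b i).1) with ht
  have hcard : t.card + s.card = n := by
    rw [ht, hs, Finset.card_filter_add_card_filter_not, Finset.card_univ,
      Fintype.card_fin]
  have hfs : ∀ i, ((s.orderIsoOfFin rfl) i : Fin n) ∈ s := fun i => ((s.orderIsoOfFin rfl) i).2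
  have hgt : ∀ j, ((t.orderIsoOfFin rfl) j : Fin n) ∈ t := fun j => ((t.orderIsoOfFin rfl) j).2
  have hfs' : ∀ i, ¬ ((a ((s.orderIsoOfFin rfl) i : Fin n)).1 = (b ((s.orderIsoOfFin rfl) i : Fin n)).1) := by
    intro i
    exact (Finset.mem_filter.mp (hfs i)).2
  have hgt' : ∀ j, (a ((t.orderIsoOfFin rfl) j : Fin n)).1 = (b ((t.orderIsoOfFin rfl) j : Fin n)).1 := by
    intro j
    exact (Finset.mem_filter.mp (hgt j)).2
  have hmono : ∀ u u' v v', SemiCond (etensor G (⊤ : SimpleGraph (Fin 2))) σ u u' v v' →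
      SemiCond (tensor G (⊤ : SimpleGraph (Fin 2))) σ u u' v v' := by
    intro u u' v v' h h1 h2 h3
    obtain ⟨hA, hB⟩ := h h1 h2 h3
    exact ⟨fun hc => hA (And.intro (Or.inl hc.1) hc.2), fun hc => hB (And.intro (Or.inl hc.1) hc.2)⟩
  refine ⟨s.card, t.card, fun i => ((s.orderIsoOfFin rfl) i : Fin n),
    fun j => ((t.orderIsoOfFin rfl) j : Fin n), by omega,
    Subtype.coe_injective.comp (s.orderIsoOfFin rfl).injective,
    Subtype.coe_injective.comp (t.orderIsoOfFin rfl).injective, ?_, ?_, ?_, ?_⟩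
  · intro i j h
    have h1 := (Finset.mem_filter.mp (hfs i)).2
    have h2 := (Finset.mem_filter.mp (hgt j)).2
    rw [show ((s.orderIsoOfFin rfl) i : Fin n) = ((t.orderIsoOfFin rfl) j : Fin n) from h] at h1
    exact h1 h2
  · refine ⟨?_, ?_, ?_⟩
    · intro i
      have h := hadj ((s.orderIsoOfFin rfl) i : Fin n)
      exact And.intro (h.1.resolve_right (hfs' i)) h.2
    · intro i j hij
      exact hdist _ _ (fun h => hij ((s.orderIsoOfFin rfl).injective (Subtype.coe_injective h)))
    · intro i j hij
      obtain ⟨H1, H2, H3, H4⟩ := hsc _ _ (fun h => hij ((s.orderIsoOfFin rfl).injective (Subtype.coe_injective h)))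
      exact ⟨hmono _ _ _ _ H1, hmono _ _ _ _ H2, hmono _ _ _ _ H3, hmono _ _ _ _ H4⟩
  · exact hgt'
  · intro j j' hjj
    have hii : ((t.orderIsoOfFin rfl) j : Fin n) ≠ ((t.orderIsoOfFin rfl) j' : Fin n) :=
      fun h => hjj ((t.orderIsoOfFin rfl).injective (Subtype.coe_injective h))
    set i : Fin n := ((t.orderIsoOfFin rfl) j : Fin n) with hi
    set i' : Fin n := ((t.orderIsoOfFin rfl) j' : Fin n) with hi'
    have hv : (a i).1 = (b i).1 := hgt' j
    have hv' : (a i').1 = (b i').1 := hgt' j'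
    have dab : a i ≠ b i := (hadj i).ne
    have dab' : a i' ≠ b i' := (hadj i').ne
    obtain ⟨daa, dab2, dbb⟩ := hdist i i' hii
    obtain ⟨-, dba2, -⟩ := hdist i' i hii.symm
    have hne1 : (a i).1 ≠ (a i').1 := by
      intro heq
      have f2 : ∀ x y z : Fin 2, x ≠ y → z = x ∨ z = y := by decide
      have hs2 : (a i).2 ≠ (b i).2 := fun h => dab (Prod.ext hv h)
      rcases f2 (a i).2 (b i).2 (a i').2 hs2 with h | h
      · exact daa (Prod.ext heq.symm h).symm
      · exact dba2 (Prod.ext (heq.symm.trans hv) h)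
    refine ⟨hne1, ?_⟩
    intro hG
    obtain ⟨S1, S2, S3, S4⟩ := hsc i i' hii
    obtain ⟨T1, T2, T3, T4⟩ := hsc i' i hii.symm
    rcases (hσ.ne dab).lt_or_gt with hab | hab <;>
      rcases (hσ.ne dab').lt_or_gt with hab' | hab'
    · rcases (hσ.ne daa).lt_or_gt with h | h
      · exact my_aux_min G σ S1 hv' dab' hab h hab' hG
      · exact my_aux_min G σ T1 hv dab hab' h hab hG.symm
    · rcases (hσ.ne dab2).lt_or_gt with h | h
      · exact my_aux_min G σ S2 hv'.symm dab'.symm hab h hab'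
          (by rw [← hv']; exact hG)
      · exact my_aux_min G σ T3 hv dab hab' h hab
          (by rw [← hv']; exact hG.symm)
    · rcases (hσ.ne dba2).lt_or_gt with h | h
      · exact my_aux_min G σ T2 hv.symm dab.symm hab' h hab
          (by rw [← hv]; exact hG.symm)
      · exact my_aux_min G σ S3 hv' dab' hab h hab'
          (by rw [← hv]; exact hG)
    · rcases (hσ.ne dbb).lt_or_gt with h | h
      · exact my_aux_min G σ S4 hv'.symm dab'.symm hab h hab'
          (by rw [← hv, ← hv']; exact hG)
      · exact my_aux_min G σ T4 hv.symm dab.symm hab' h hab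
          (by rw [← hv, ← hv']; exact hG.symm)

theorem stmt4 {V : Type*} [Fintype V] (G : SimpleGraph V) :
    (∀ (σ : V × Fin 2 → ℕ), Function.Injective σ →
      ∀ (n : ℕ) (a b : Fin n → V × Fin 2),
        IsSemiIndMatching (etensor G (⊤ : SimpleGraph (Fin 2))) σ a b →
        ∃ (n₁ n₂ : ℕ) (f : Fin n₁ → Fin n) (g : Fin n₂ → Fin n),
          n = n₁ + n₂ ∧ Function.Injective f ∧ Function.Injective g ∧
          (∀ i j, f i ≠ g j) ∧
          IsSemiIndMatching (tensor G (⊤ : SimpleGraph (Fin 2))) σ (a ∘ f) (b ∘ f) ∧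
          (∀ j, (a (g j)).1 = (b (g j)).1) ∧
          (∀ j j', j ≠ j' → (a (g j)).1 ≠ (a (g j')).1 ∧ ¬ G.Adj (a (g j)).1 (a (g j')).1)) ∧
    simNum (etensor G (⊤ : SimpleGraph (Fin 2))) ≤
      simNum (tensor G (⊤ : SimpleGraph (Fin 2))) + _root_.indepNum G := by
  classical
  refine ⟨fun σ hσ n a b hM => my_decomp G σ hσ n a b hM, ?_⟩
  obtain ⟨σ0, hσ0⟩ : ∃ σ : V × Fin 2 → ℕ, Function.Injective σ :=
    (countable_iff_exists_injective _).mp inferInstance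
  unfold simNum _root_.indepNum
  apply csSup_le
  · exact ⟨0, σ0, hσ0, Fin.elim0, Fin.elim0, fun i => i.elim0, fun i => i.elim0,
      fun i => i.elim0⟩
  · rintro n ⟨σ, hσ, a, b, hM⟩
    obtain ⟨n₁, n₂, f, g, hn12, hf, hg, hfg, hM1, hg1, hg2⟩ := my_decomp G σ hσ n a b hM
    have h1 : n₁ ≤ sSup {n | ∃ σ : V × Fin 2 → ℕ, Function.Injective σ ∧
        ∃ a b : Fin n → V × Fin 2,
          IsSemiIndMatching (tensor G (⊤ : SimpleGraph (Fin 2))) σ a b} := by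
      apply le_csSup
      · refine ⟨Fintype.card (V × Fin 2), ?_⟩
        rintro m ⟨τ, hτ, c, d, hc⟩
        have hcinj : Function.Injective c := by
          intro i j hij
          by_contra h
          exact (hc.2.1 i j h).1 hij
        simpa using Fintype.card_le_of_injective c hcinj
      · exact ⟨σ, hσ, a ∘ f, b ∘ f, hM1⟩
    have h2 : n₂ ≤ sSup {n | ∃ s : Finset V, s.card = n ∧ ∀ u ∈ s, ∀ v ∈ s, ¬ G.Adj u v} := by
      apply le_csSup
      · refine ⟨Fintype.card V, ?_⟩
        rintro m ⟨s, hs, -⟩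
        rw [← hs]
        simpa using s.card_le_univ
      · have hginj : Function.Injective (fun j => (a (g j)).1) := by
          intro j j' h
          by_contra hne
          exact (hg2 j j' hne).1 h
        refine ⟨Finset.univ.image (fun j => (a (g j)).1), ?_, ?_⟩
        · rw [Finset.card_image_of_injective _ hginj, Finset.card_univ, Fintype.card_fin]
        · intro u hu v hv
          simp only [Finset.mem_image, Finset.mem_univ, true_and] at hu hv
          obtain ⟨j, rfl⟩ := hu
          obtain ⟨j', rfl⟩ := hv
          by_cases h : j = j'
          · subst h; exact G.irrefl
          · exact (hg2 j j' h).2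
    omega
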